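/- Every k-round word over an n-stack partitioned alphabet is k-scoped: if a word w can be written as k rounds, then for every stack h and every matched call–return pair (i,j) of stack h in w, the return position j lies within at most k maximal stack-h contexts after the context containing i (counting the context of i). -/

import Mathlib

inductive SymKind : Type
  | call | ret | intern
deriving DecidableEq

/-- Stack-semantics matching for stack `h`: scan the word left-to-right,
ignoring all symbols not belonging to stack `h`, pushing call positions of
stack `h` and popping on return positions of stack `h`. -/
def mpairsH {σ : Type*} {n : ℕ} (st : σ → Fin n) (kind : σ → SymKind) (h : Fin n) :
    List σ → ℕ → List ℕ → List (ℕ × ℕ)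
  | [], _, _ => []
  | a :: rest, i, stk =>
    if st a = h then
      match kind a with
      | SymKind.call => mpairsH st kind h rest (i + 1) (i :: stk)
      | SymKind.ret =>
        match stk with
        | [] => mpairsH st kind h rest (i + 1) []
        | c :: stk' => (c, i) :: mpairsH st kind h rest (i + 1) stk'
      | SymKind.intern => mpairsH st kind h rest (i + 1) stk
    else mpairsH st kind h rest (i + 1) stk

/-- `i` and `j` are a matched call–return pair of stack `h` in `w`. -/
def MatchedH {σ : Type*} {n : ℕ} (st : σ → Fin n) (kind : σ → SymKind)
    (h : Fin n) (w : List σ) (i j : ℕ) : Prop :=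
  (i, j) ∈ mpairsH st kind h w 0 []

/-- Position `p` starts a maximal stack-`h` context of `w`. -/
def StartsCtx {σ : Type*} {n : ℕ} (st : σ → Fin n) (h : Fin n) (w : List σ)
    (p : ℕ) : Prop :=
  (∃ a, w[p]? = some a ∧ st a = h) ∧
  (p = 0 ∨ ∀ b, w[p - 1]? = some b → st b ≠ h)

/-- Index (counting from 1) of the maximal stack-`h` context containing or
preceding position `i`: the number of maximal stack-`h` contexts starting at
or before `i`. -/
noncomputable def ctxIdx {σ : Type*} {n : ℕ} (st : σ → Fin n) (h : Fin n)
    (w : List σ) (i : ℕ) : ℕ :=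
  Nat.card {p : ℕ // p ≤ i ∧ StartsCtx st h w p}

/-- `w` is `k`-scoped: every matched return of stack `h` lies within at most
`k` maximal stack-`h` contexts from the one containing its call (inclusive). -/
def KScoped {σ : Type*} {n : ℕ} (st : σ → Fin n) (kind : σ → SymKind) (k : ℕ)
    (w : List σ) : Prop :=
  ∀ (h : Fin n) (i j : ℕ), MatchedH st kind h w i j →
    ctxIdx st h w j < ctxIdx st h w i + k

def IsContext {σ : Type*} {n : ℕ} (st : σ → Fin n) (h : Fin n) (u : List σ) : Prop :=
  ∀ a ∈ u, st a = h

def IsRound {σ : Type*} {n : ℕ} (st : σ → Fin n) (u : List σ) : Prop :=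
  ∃ f : Fin n → List σ, u = (List.ofFn f).flatten ∧ ∀ h, IsContext st h (f h)

def IsKRound {σ : Type*} {n : ℕ} (st : σ → Fin n) (k : ℕ) (w : List σ) : Prop :=
  ∃ g : Fin k → List σ, w = (List.ofFn g).flatten ∧ ∀ i, IsRound st (g i)

section Aux

variable {σ : Type*} {n : ℕ} (st : σ → Fin n) (kind : σ → SymKind) (h : Fin n)

lemma mpairsH_nil (i0 : ℕ) (stk : List ℕ) : mpairsH st kind h [] i0 stk = [] := rfl

lemma mpairsH_cons (a : σ) (rest : List σ) (i0 : ℕ) (stk : List ℕ) :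
    mpairsH st kind h (a :: rest) i0 stk =
      if st a = h then
        match kind a with
        | SymKind.call => mpairsH st kind h rest (i0 + 1) (i0 :: stk)
        | SymKind.ret =>
          match stk with
          | [] => mpairsH st kind h rest (i0 + 1) []
          | c :: stk' => (c, i0) :: mpairsH st kind h rest (i0 + 1) stk'
        | SymKind.intern => mpairsH st kind h rest (i0 + 1) stk
      else mpairsH st kind h rest (i0 + 1) stk := rfl

/-- Any first component of a pair produced by `mpairsH` satisfies any predicate
that holds on stack entries and on call positions. -/
lemma mpairsH_fst_prop (P : ℕ → Prop) :
    ∀ (w : List σ) (i0 : ℕ) (stk : List ℕ),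
      (∀ c ∈ stk, P c) →
      (∀ p a, w[p]? = some a → st a = h → P (i0 + p)) →
      ∀ c r, (c, r) ∈ mpairsH st kind h w i0 stk → P c := by
  intro w
  induction w with
  | nil => intro i0 stk _ _ c r hm; simp [mpairsH_nil] at hm
  | cons a rest ih =>
    intro i0 stk hstk hpos c r hm
    have hpos' : ∀ p a', rest[p]? = some a' → st a' = h → P (i0 + 1 + p) := by
      intro p a' hget hst
      have := hpos (p + 1) a' (by simpa using hget) hst
      have e : i0 + (p + 1) = i0 + 1 + p := by omega
      rwa [e] at this
    by_cases hsa : st a = h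
    · rcases hk : kind a with _ | _ | _
      · -- call
        have hm' : (c, r) ∈ mpairsH st kind h rest (i0 + 1) (i0 :: stk) := by
          simp only [mpairsH_cons, if_pos hsa, hk] at hm
          exact hm
        refine ih (i0 + 1) (i0 :: stk) ?_ hpos' c r hm'
        intro c' hc'
        rcases List.mem_cons.mp hc' with rfl | hc'
        · have := hpos 0 a (by simp) hsa
          simpa using this
        · exact hstk c' hc'
      · -- ret
        rcases stk with _ | ⟨c0, stk'⟩
        · have hm' : (c, r) ∈ mpairsH st kind h rest (i0 + 1) [] := by
            simp only [mpairsH_cons, if_pos hsa, hk] at hm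
            exact hm
          exact ih (i0 + 1) [] (by simp) hpos' c r hm'
        · have hm' : (c, r) = (c0, i0) ∨ (c, r) ∈ mpairsH st kind h rest (i0 + 1) stk' := by
            simp only [mpairsH_cons, if_pos hsa, hk] at hm
            simpa using hm
          rcases hm' with heq | hm'
          · have : c = c0 := by simpa using congrArg Prod.fst heq
            subst this
            exact hstk c (by simp)
          · exact ih (i0 + 1) stk' (fun c' hc' => hstk c' (by simp [hc'])) hpos' c r hm'
      · -- intern
        have hm' : (c, r) ∈ mpairsH st kind h rest (i0 + 1) stk := by
          simp only [mpairsH_cons, if_pos hsa, hk] at hm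
          exact hm
        exact ih (i0 + 1) stk hstk hpos' c r hm'
    · have hm' : (c, r) ∈ mpairsH st kind h rest (i0 + 1) stk := by
        simp only [mpairsH_cons, if_neg hsa] at hm
        exact hm
      exact ih (i0 + 1) stk hstk hpos' c r hm'

lemma matched_call_pos {w : List σ} {i j : ℕ} (hm : MatchedH st kind h w i j) :
    ∃ a, w[i]? = some a ∧ st a = h := by
  refine mpairsH_fst_prop st kind h (fun c => ∃ a, w[c]? = some a ∧ st a = h) w 0 []
    (by simp) ?_ i j hm
  intro p a hget hst
  exact ⟨a, by simpa using hget, hst⟩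

lemma startsCtx_lt_length {w : List σ} {p : ℕ} (hp : StartsCtx st h w p) : p < w.length := by
  obtain ⟨⟨a, ha, _⟩, _⟩ := hp
  exact (List.getElem?_eq_some_iff.mp ha).1

/-- If position `i` holds a stack-`h` symbol, some context start is `≤ i`. -/
lemma exists_start (w : List σ) :
    ∀ i, (∃ a, w[i]? = some a ∧ st a = h) → ∃ p ≤ i, StartsCtx st h w p := by
  intro i
  induction i with
  | zero => intro hi; exact ⟨0, le_refl 0, hi, Or.inl rfl⟩
  | succ m ih =>
    intro hi
    by_cases hprev : ∀ b, w[m]? = some b → st b ≠ h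
    · exact ⟨m + 1, le_refl _, hi, Or.inr (by simpa using hprev)⟩
    · push_neg at hprev
      obtain ⟨b, hb, hstb⟩ := hprev
      obtain ⟨p, hp, hps⟩ := ih ⟨b, hb, hstb⟩
      exact ⟨p, by omega, hps⟩

/-- Starts within the prefix of an append. -/
lemma startsCtx_append_left {u v : List σ} {p : ℕ} (hp : p < u.length)
    (hs : StartsCtx st h (u ++ v) p) : StartsCtx st h u p := by
  obtain ⟨⟨a, ha, hsta⟩, hor⟩ := hs
  refine ⟨⟨a, ?_, hsta⟩, ?_⟩
  · rwa [List.getElem?_append_left hp] at ha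
  · rcases hor with h0 | hpr
    · exact Or.inl h0
    · refine Or.inr fun b hb => hpr b ?_
      rwa [List.getElem?_append_left (by omega)]

/-- Starts within the suffix of an append. -/
lemma startsCtx_append_right {u v : List σ} {p : ℕ} (hp : u.length ≤ p)
    (hs : StartsCtx st h (u ++ v) p) : StartsCtx st h v (p - u.length) := by
  obtain ⟨⟨a, ha, hsta⟩, hor⟩ := hs
  refine ⟨⟨a, ?_, hsta⟩, ?_⟩
  · rwa [List.getElem?_append_right hp] at ha
  · rcases Nat.eq_or_lt_of_le hp with heq | hlt
    · exact Or.inl (by omega)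
    · refine Or.inr fun b hb => ?_
      rcases hor with h0 | hpr
      · omega
      · refine hpr b ?_
        rw [List.getElem?_append_right (by omega)]
        have e : p - 1 - u.length = p - u.length - 1 := by omega
        rwa [e]

/-- A list of monochromatic blocks with pairwise distinct colors. -/
def GoodBlocks (L : List (List σ)) : Prop :=
  (∀ b ∈ L, ∃ c, ∀ a ∈ b, st a = c) ∧
    L.Pairwise (fun b1 b2 => ∀ a ∈ b1, ∀ a' ∈ b2, st a ≠ st a')

lemma isRound_goodBlocks {u : List σ} (hu : IsRound st u) :
    ∃ L : List (List σ), u = L.flatten ∧ GoodBlocks st L := by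
  obtain ⟨f, rfl, hf⟩ := hu
  refine ⟨List.ofFn f, rfl, ?_, ?_⟩
  · intro b hb
    obtain ⟨i, rfl⟩ := List.mem_ofFn.mp hb
    exact ⟨i, hf i⟩
  · rw [List.pairwise_ofFn]
    intro i j hij a ha a' ha'
    rw [hf i a ha, hf j a' ha']
    exact Fin.ne_of_lt hij

/-- At most one maximal stack-`h` context start in a flatten of good blocks. -/
lemma goodBlocks_start_subsingleton :
    ∀ L : List (List σ), GoodBlocks st L →
      ∀ p q, StartsCtx st h L.flatten p → StartsCtx st h L.flatten q → p = q := by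
  intro L
  induction L with
  | nil =>
    intro _ p q hp _
    have := startsCtx_lt_length st h hp
    simp at this
  | cons b L ih =>
    intro hgood p q hp hq
    obtain ⟨hmono, hpw⟩ := hgood
    have hgood' : GoodBlocks st L := ⟨fun b' hb' => hmono b' (by simp [hb']),
      (List.pairwise_cons.mp hpw).2⟩
    have hbmono := hmono b (by simp)
    have hflat : (b :: L).flatten = b ++ L.flatten := by simp
    rw [hflat] at hp hq
    -- a start inside block b must be at position 0
    have hinb : ∀ r, r < b.length → StartsCtx st h (b ++ L.flatten) r → r = 0 := by
      intro r hr hs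
      have hs' := startsCtx_append_left st h hr hs
      obtain ⟨⟨a, ha, hsta⟩, hor⟩ := hs'
      rcases hor with h0 | hpr
      · exact h0
      · by_contra hne
        have hr1 : r - 1 < b.length := by omega
        obtain ⟨a', ha'⟩ : ∃ a', b[r - 1]? = some a' :=
          ⟨b[r - 1]'hr1, by simp [hr1]⟩
        obtain ⟨c, hc⟩ := hbmono
        have e1 : st a' = c := hc a' (List.mem_of_getElem? ha')
        have e2 : st a = c := hc a (List.mem_of_getElem? ha)
        exact hpr a' ha' (by rw [e1, ← e2, hsta])
    -- a start inside b and a symbol of stack h in L.flatten contradict pairwise distinctness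
    have hnotboth : ∀ r s, r < b.length → b.length ≤ s →
        StartsCtx st h (b ++ L.flatten) r → StartsCtx st h (b ++ L.flatten) s → False := by
      intro r s hr hsle hsr hss
      obtain ⟨⟨a, ha, hsta⟩, _⟩ := startsCtx_append_left st h hr hsr
      obtain ⟨⟨a', ha', hsta'⟩, _⟩ := startsCtx_append_right st h hsle hss
      have hamem : a ∈ b := List.mem_of_getElem? ha
      have ha'mem : a' ∈ L.flatten := List.mem_of_getElem? ha'
      obtain ⟨blk, hblk, ha'blk⟩ := List.mem_flatten.mp ha'mem
      have := (List.pairwise_cons.mp hpw).1 blk hblk a hamem a' ha'blk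
      exact this (by rw [hsta, hsta'])
    rcases lt_or_ge p b.length with hpl | hpl <;> rcases lt_or_ge q b.length with hql | hql
    · rw [hinb p hpl hp, hinb q hql hq]
    · exact absurd (hnotboth p q hpl hql hp hq) (by simp)
    · exact absurd (hnotboth q p hql hpl hq hp) (by simp)
    · have hp' := startsCtx_append_right st h hpl hp
      have hq' := startsCtx_append_right st h hql hq
      have := ih hgood' _ _ hp' hq'
      omega

lemma startsSet_finite (w : List σ) : {p : ℕ | StartsCtx st h w p}.Finite :=
  (Set.finite_Iio w.length).subset fun p hp => startsCtx_lt_length st h hp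

/-- The number of maximal stack-`h` context starts in a concatenation of rounds
is at most the number of rounds. -/
lemma count_starts_le :
    ∀ L : List (List σ), (∀ r ∈ L, IsRound st r) →
      {p : ℕ | StartsCtx st h L.flatten p}.ncard ≤ L.length := by
  intro L
  induction L with
  | nil =>
    intro _
    have he : {p : ℕ | StartsCtx st h ([] : List (List σ)).flatten p} = ∅ := by
      ext p
      simp only [Set.mem_setOf_eq, Set.mem_empty_iff_false, iff_false]
      intro hp
      have := startsCtx_lt_length st h hp
      simp at this
    rw [he]
    simp
  | cons u L ih =>
    intro hr
    have hu : IsRound st u := hr u (by simp)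
    have hL : ∀ r ∈ L, IsRound st r := fun r hr' => hr r (by simp [hr'])
    have hflat : (u :: L).flatten = u ++ L.flatten := by simp
    set v := L.flatten with hv
    have hsub : {p : ℕ | StartsCtx st h (u ++ v) p} ⊆
        {p : ℕ | StartsCtx st h u p} ∪ ((· + u.length) '' {p : ℕ | StartsCtx st h v p}) := by
      intro p hp
      rcases lt_or_ge p u.length with hpl | hpl
      · exact Or.inl (startsCtx_append_left st h hpl hp)
      · exact Or.inr ⟨p - u.length, startsCtx_append_right st h hpl hp,
          by simpa using Nat.sub_add_cancel hpl⟩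
    have hfin1 := startsSet_finite st h u
    have hfin2 := (startsSet_finite st h v).image (· + u.length)
    have h1 : {p : ℕ | StartsCtx st h u p}.ncard ≤ 1 := by
      obtain ⟨Lb, hub, hgood⟩ := isRound_goodBlocks st hu
      refine (Set.ncard_le_one hfin1).mpr ?_
      intro p hp q hq
      rw [hub] at hp hq
      exact goodBlocks_start_subsingleton st h Lb hgood p q hp hq
    have h2 : ((· + u.length) '' {p : ℕ | StartsCtx st h v p}).ncard
        = {p : ℕ | StartsCtx st h v p}.ncard :=
      Set.ncard_image_of_injective _ (add_left_injective u.length)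
    calc {p : ℕ | StartsCtx st h (u :: L).flatten p}.ncard
        = {p : ℕ | StartsCtx st h (u ++ v) p}.ncard := by rw [hflat]
      _ ≤ ({p : ℕ | StartsCtx st h u p}
            ∪ ((· + u.length) '' {p : ℕ | StartsCtx st h v p})).ncard :=
          Set.ncard_le_ncard hsub (hfin1.union hfin2)
      _ ≤ {p : ℕ | StartsCtx st h u p}.ncard
            + ((· + u.length) '' {p : ℕ | StartsCtx st h v p}).ncard :=
          Set.ncard_union_le _ _
      _ ≤ 1 + L.length := by rw [h2]; exact Nat.add_le_add h1 (ih hL)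
      _ = (u :: L).length := by simp [Nat.add_comm]

lemma ctxIdx_eq_ncard (w : List σ) (i : ℕ) :
    ctxIdx st h w i = {p : ℕ | p ≤ i ∧ StartsCtx st h w p}.ncard := by
  rw [ctxIdx, ← Nat.card_coe_set_eq]
  rfl

end Aux

/-- Every `k`-round word is `k`-scoped. -/
theorem kround_imp_kscoped {σ : Type*} {n : ℕ} (st : σ → Fin n)
    (kind : σ → SymKind) (k : ℕ) (w : List σ) (hw : IsKRound st k w) :
    KScoped st kind k w := by
  intro h i j hm
  obtain ⟨g, hwg, hg⟩ := hw
  -- total number of context starts is at most k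
  have hcount : {p : ℕ | StartsCtx st h w p}.ncard ≤ k := by
    have := count_starts_le st h (List.ofFn g) (by
      intro r hr
      obtain ⟨t, rfl⟩ := List.mem_ofFn.mp hr
      exact hg t)
    rw [← hwg] at this
    simpa using this
  have hfin := startsSet_finite st h w
  -- ctxIdx at j is at most k
  have hj : ctxIdx st h w j ≤ k := by
    rw [ctxIdx_eq_ncard]
    refine le_trans (Set.ncard_le_ncard ?_ hfin) hcount
    intro p hp
    exact hp.2
  -- ctxIdx at i is positive
  have hi : 0 < ctxIdx st h w i := by
    obtain ⟨a, ha, hsta⟩ := matched_call_pos st kind h hm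
    obtain ⟨p, hpi, hps⟩ := exists_start st h w i ⟨a, ha, hsta⟩
    rw [ctxIdx_eq_ncard]
    refine Set.ncard_pos ?_ |>.mpr ⟨p, hpi, hps⟩
    exact (hfin.subset fun q hq => hq.2)
  omega
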